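/- Let μ be a positive Borel measure on (0,∞) with sup_{n∈ℕ₀} μ_n < ∞, where μ_n = ∫_{(0,∞)} t^{-(n+1)} dμ(t). Let f : ℂ → ℂ be entire with Taylor expansion f(z) = Σ_{n=0}^∞ a_n z^n. Then for every z ∈ ℂ the integral H_μ f(z) = ∫_{(0,∞)} (1/t) f(z/t) dμ(t) converges absolutely and H_μ f(z) = Σ_{n=0}^∞ μ_n a_n z^n; in particular H_μ f is entire with Taylor coefficients μ_n a_n. -/

import Mathlib

open MeasureTheory Set
open scoped ENNReal

open Filter in
lemma auxSummable (a : ℕ → ℂ) (h : ∀ z : ℂ, Summable fun n => a n * z ^ n) (z : ℂ) :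
    Summable fun n => ‖a n‖ * ‖z‖ ^ n := by
  set w : ℂ := ((2 * ‖z‖ + 1 : ℝ) : ℂ) with hw
  have hwn : ‖w‖ = 2 * ‖z‖ + 1 := by
    rw [hw, Complex.norm_real, Real.norm_of_nonneg (by positivity)]
  have hwpos : (0:ℝ) < ‖w‖ := by rw [hwn]; positivity
  obtain ⟨M, hM⟩ : BddAbove (Set.range fun n => ‖a n * w ^ n‖) :=
    ((h w).tendsto_atTop_zero.norm).bddAbove_range
  have hM' : ∀ n, ‖a n‖ * ‖w‖ ^ n ≤ M := by
    intro n
    have := hM (Set.mem_range_self (f := fun n => ‖a n * w ^ n‖) n)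
    simpa [norm_mul, norm_pow] using this
  have hr : ‖z‖ / ‖w‖ < 1 := by
    rw [div_lt_one hwpos, hwn]
    nlinarith [norm_nonneg z]
  have hr0 : 0 ≤ ‖z‖ / ‖w‖ := by positivity
  refine Summable.of_nonneg_of_le (fun n => by positivity) (fun n => ?_)
    ((summable_geometric_of_lt_one hr0 hr).mul_left M)
  have hzn : ‖z‖ ^ n = ‖w‖ ^ n * (‖z‖ / ‖w‖) ^ n := by
    rw [div_pow, mul_div_cancel₀ _ (pow_ne_zero n hwpos.ne')]
  calc ‖a n‖ * ‖z‖ ^ n = ‖a n‖ * ‖w‖ ^ n * (‖z‖ / ‖w‖) ^ n := by rw [hzn]; ring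
    _ ≤ M * (‖z‖ / ‖w‖) ^ n := mul_le_mul_of_nonneg_right (hM' n) (by positivity)

lemma auxDiff (c : ℕ → ℂ) (g : ℂ → ℂ)
    (hs : ∀ z : ℂ, Summable fun n => ‖c n‖ * ‖z‖ ^ n)
    (hg : ∀ z : ℂ, HasSum (fun n => c n * z ^ n) (g z)) :
    Differentiable ℂ g := by
  set p := FormalMultilinearSeries.ofScalars ℂ c with hp
  have hrad : p.radius = ⊤ := by
    apply FormalMultilinearSeries.radius_eq_top_of_summable_norm
    intro r
    have h1 : ∀ n, ‖p n‖ = ‖c n‖ := fun n => FormalMultilinearSeries.ofScalars_norm ℂ c n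
    simp only [h1]
    have h2 : ‖(((r : ℝ)) : ℂ)‖ = (r : ℝ) := by
      rw [Complex.norm_real, Real.norm_eq_abs, abs_of_nonneg r.coe_nonneg]
    have h3 := hs ((r : ℝ) : ℂ)
    simp only [h2] at h3
    exact h3
  have hball : HasFPowerSeriesOnBall g p 0 ⊤ :=
    { r_le := by rw [hrad]
      r_pos := by simp
      hasSum := by
        intro y _
        have h4 : (fun n => p n fun _ => y) = fun n => c n * y ^ n := by
          funext n
          rw [hp, FormalMultilinearSeries.ofScalars_apply_eq, smul_eq_mul]
        rw [zero_add, h4]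
        exact hg y }
  intro z
  exact (hball.analyticAt_of_mem (by simp [EMetric.mem_ball, edist_lt_top])).differentiableAt

theorem stmt10 (μ : Measure ℝ) (hμ : μ (Set.Iic 0) = 0)
    (hsup : (⨆ n : ℕ, ∫⁻ t in Set.Ioi (0:ℝ), ENNReal.ofReal (1 / t ^ (n + 1)) ∂μ) < ⊤)
    (f : ℂ → ℂ) (a : ℕ → ℂ) (hf : ∀ z : ℂ, HasSum (fun n : ℕ => a n * z ^ n) (f z)) :
    (∀ z : ℂ, IntegrableOn (fun t : ℝ => (1 / (t:ℂ)) * f (z / (t:ℂ))) (Set.Ioi 0) μ) ∧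
    (∀ z : ℂ, HasSum
      (fun n : ℕ => ((∫ t in Set.Ioi (0:ℝ), 1 / t ^ (n + 1) ∂μ : ℝ) : ℂ) * a n * z ^ n)
      (∫ t in Set.Ioi (0:ℝ), (1 / (t:ℂ)) * f (z / (t:ℂ)) ∂μ)) ∧
    Differentiable ℂ (fun z => ∫ t in Set.Ioi (0:ℝ), (1 / (t:ℂ)) * f (z / (t:ℂ)) ∂μ) := by
  classical
  set S := ⨆ n : ℕ, ∫⁻ t in Set.Ioi (0:ℝ), ENNReal.ofReal (1 / t ^ (n + 1)) ∂μ with hSdef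
  have hS : S < ⊤ := hsup
  set C := S.toReal with hCdef
  have hC0 : 0 ≤ C := ENNReal.toReal_nonneg
  have hmeas : ∀ n : ℕ, Measurable fun t : ℝ => 1 / t ^ (n + 1) := fun n =>
    measurable_const.div (measurable_id.pow_const _)
  -- lintegral of nnnorm equals the lintegral in the hypothesis
  have hee : ∀ n : ℕ, ∫⁻ t in Set.Ioi (0:ℝ), ((‖(1 / t ^ (n+1) : ℝ)‖₊ : ℝ≥0∞)) ∂μ
      = ∫⁻ t in Set.Ioi (0:ℝ), ENNReal.ofReal (1 / t ^ (n + 1)) ∂μ := by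
    intro n
    refine lintegral_congr_ae ?_
    filter_upwards [ae_restrict_mem measurableSet_Ioi] with t ht
    have ht' : (0:ℝ) < t := ht
    exact Real.enorm_eq_ofReal (by positivity)
  have hfin : ∀ n, ∫⁻ t in Set.Ioi (0:ℝ), ((‖(1 / t ^ (n+1) : ℝ)‖₊ : ℝ≥0∞)) ∂μ ≤ S := by
    intro n
    rw [hee n, hSdef]
    exact le_iSup (fun n => ∫⁻ t in Set.Ioi (0:ℝ), ENNReal.ofReal (1 / t ^ (n + 1)) ∂μ) n
  have hgint : ∀ n, IntegrableOn (fun t : ℝ => 1 / t ^ (n+1)) (Set.Ioi 0) μ := fun n =>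
    ⟨(hmeas n).aestronglyMeasurable, lt_of_le_of_lt (hfin n) hS⟩
  set m : ℕ → ℝ := fun n => ∫ t in Set.Ioi (0:ℝ), 1 / t ^ (n+1) ∂μ with hmdef
  have hm_eq : ∀ n, m n
      = (∫⁻ t in Set.Ioi (0:ℝ), ENNReal.ofReal (1 / t ^ (n+1)) ∂μ).toReal := by
    intro n
    exact integral_eq_lintegral_of_nonneg_ae
      (by filter_upwards [ae_restrict_mem measurableSet_Ioi] with t ht
          have ht' : (0:ℝ) < t := ht
          positivity)
      ((hmeas n).aestronglyMeasurable)
  have hm_nonneg : ∀ n, 0 ≤ m n := fun n => (hm_eq n) ▸ ENNReal.toReal_nonneg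
  have hm_le : ∀ n, m n ≤ C := by
    intro n
    rw [hm_eq n, hCdef]
    exact ENNReal.toReal_mono hS.ne
      (le_iSup (fun n => ∫⁻ t in Set.Ioi (0:ℝ), ENNReal.ofReal (1 / t ^ (n + 1)) ∂μ) n)
  have hsumm : ∀ z : ℂ, Summable fun n => ‖a n‖ * ‖z‖ ^ n :=
    auxSummable a (fun z => (hf z).summable)
  have hfdiff : Differentiable ℂ f := auxDiff a f hsumm hf
  -- main per-z statement
  have main : ∀ z : ℂ,
      IntegrableOn (fun t : ℝ => (1 / (t:ℂ)) * f (z / (t:ℂ))) (Set.Ioi 0) μ ∧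
      HasSum (fun n : ℕ => ((m n : ℝ) : ℂ) * a n * z ^ n)
        (∫ t in Set.Ioi (0:ℝ), (1 / (t:ℂ)) * f (z / (t:ℂ)) ∂μ) := by
    intro z
    set F : ℕ → ℝ → ℂ := fun n t => ((1 / t ^ (n+1) : ℝ) : ℂ) * (a n * z ^ n) with hF
    have hFint : ∀ n, IntegrableOn (F n) (Set.Ioi 0) μ := by
      intro n
      have h0 := (hgint n).smul_const (a n * z ^ n)
      refine h0.congr (Filter.Eventually.of_forall fun t => ?_)
      simp [hF, Complex.real_smul]
    have hpt : ∀ t : ℝ, t ∈ Set.Ioi (0:ℝ) →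
        HasSum (fun n => F n t) ((1 / (t:ℂ)) * f (z / (t:ℂ))) := by
      intro t ht
      have ht0 : (t:ℂ) ≠ 0 := by
        exact_mod_cast (ne_of_gt (show (0:ℝ) < t from ht))
      have h1 := (hf (z / (t:ℂ))).mul_left (1 / (t:ℂ))
      have heq : (fun n => (1 / (t:ℂ)) * (a n * (z / (t:ℂ)) ^ n)) = fun n => F n t := by
        funext n
        have hc : ((1 / t ^ (n+1) : ℝ) : ℂ) = 1 / (t:ℂ) ^ (n+1) := by push_cast; ring
        simp only [hF, hc, div_pow, div_eq_mul_inv, one_mul, pow_succ, mul_inv]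
        push_cast
        ring
      rwa [heq] at h1
    have hnormF : ∀ n, ∀ t ∈ Set.Ioi (0:ℝ),
        ‖F n t‖ = (1 / t ^ (n+1)) * ‖a n * z ^ n‖ := by
      intro n t ht
      have ht' : (0:ℝ) < t := ht
      simp only [hF, norm_mul, Complex.norm_real, Real.norm_eq_abs]
      rw [abs_of_nonneg (by positivity : (0:ℝ) ≤ 1 / t ^ (n+1))]
    have hFnorm : ∀ n, ∫ t in Set.Ioi (0:ℝ), ‖F n t‖ ∂μ ≤ C * (‖a n‖ * ‖z‖ ^ n) := by
      intro n
      have h1 : ∀ᵐ t ∂(μ.restrict (Set.Ioi (0:ℝ))),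
          ‖F n t‖ = (1 / t ^ (n+1)) * ‖a n * z ^ n‖ := by
        filter_upwards [ae_restrict_mem measurableSet_Ioi] with t ht
        exact hnormF n t ht
      rw [integral_congr_ae h1, integral_mul_const]
      have h2 : ‖a n * z ^ n‖ = ‖a n‖ * ‖z‖ ^ n := by simp [norm_mul, norm_pow]
      rw [h2]
      exact mul_le_mul_of_nonneg_right (hm_le n) (by positivity)
    have hFsum : Summable fun n => ∫ t in Set.Ioi (0:ℝ), ‖F n t‖ ∂μ :=
      Summable.of_nonneg_of_le (fun n => integral_nonneg fun t => norm_nonneg _)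
        hFnorm ((hsumm z).mul_left C)
    have hsum_int := MeasureTheory.hasSum_integral_of_summable_integral_norm hFint hFsum
    have hint_eq : (fun n => ∫ t in Set.Ioi (0:ℝ), F n t ∂μ)
        = fun n => ((m n : ℝ) : ℂ) * a n * z ^ n := by
      funext n
      calc ∫ t in Set.Ioi (0:ℝ), F n t ∂μ
          = ∫ t in Set.Ioi (0:ℝ), (1 / t ^ (n+1) : ℝ) • (a n * z ^ n) ∂μ := by
            refine integral_congr_ae (Filter.Eventually.of_forall fun t => ?_)
            simp [hF, Complex.real_smul]
        _ = (m n) • (a n * z ^ n) := integral_smul_const _ _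
        _ = ((m n : ℝ) : ℂ) * a n * z ^ n := by
            rw [Complex.real_smul]; ring
    have htsum_eq : ∫ t in Set.Ioi (0:ℝ), (∑' n, F n t) ∂μ
        = ∫ t in Set.Ioi (0:ℝ), (1 / (t:ℂ)) * f (z / (t:ℂ)) ∂μ := by
      refine integral_congr_ae ?_
      filter_upwards [ae_restrict_mem measurableSet_Ioi] with t ht
      exact (hpt t ht).tsum_eq
    rw [hint_eq, htsum_eq] at hsum_int
    refine ⟨?_, hsum_int⟩
    -- integrability of the target function
    have hcont : ContinuousOn (fun t : ℝ => (1 / (t:ℂ)) * f (z / (t:ℂ))) (Set.Ioi 0) := by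
      have hne : ∀ t ∈ Set.Ioi (0:ℝ), (t:ℂ) ≠ 0 := fun t ht => by
        exact_mod_cast (ne_of_gt (show (0:ℝ) < t from ht))
      have hc : ContinuousOn (fun t : ℝ => ((t:ℂ))) (Set.Ioi 0) :=
        Complex.continuous_ofReal.continuousOn
      exact ((continuousOn_const.div hc hne)).mul
        ((hfdiff.continuous.comp_continuousOn (continuousOn_const.div hc hne)))
    have hmeas2 : AEStronglyMeasurable (fun t : ℝ => (1 / (t:ℂ)) * f (z / (t:ℂ)))
        (μ.restrict (Set.Ioi 0)) := hcont.aestronglyMeasurable measurableSet_Ioi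
    refine ⟨hmeas2, ?_⟩
    -- finite integral via lintegral bound
    have hbound : ∀ᵐ (t : ℝ) ∂(μ.restrict (Set.Ioi (0:ℝ))),
        (‖(1 / (t:ℂ)) * f (z / (t:ℂ))‖₊ : ℝ≥0∞) ≤ ∑' n, (‖F n t‖₊ : ℝ≥0∞) := by
      filter_upwards [ae_restrict_mem measurableSet_Ioi] with t ht
      have ht' : (0:ℝ) < t := ht
      have hs1 : Summable fun n => ‖F n t‖ := by
        have h1 := (hsumm (z / (t:ℂ))).mul_left (1 / t)
        refine (h1.congr fun n => ?_)
        rw [hnormF n t ht]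
        have hzt : ‖z / (t:ℂ)‖ = ‖z‖ / t := by
          rw [norm_div, Complex.norm_real, Real.norm_eq_abs, abs_of_pos ht']
        rw [hzt]
        have h2 : ‖a n * z ^ n‖ = ‖a n‖ * ‖z‖ ^ n := by simp [norm_mul, norm_pow]
        rw [h2, div_pow]
        simp only [div_eq_mul_inv, one_mul, pow_succ, mul_inv]
        ring
      have hs2 : Summable fun n => ‖F n t‖₊ := by
        rw [← NNReal.summable_coe]
        simpa [coe_nnnorm] using hs1
      rw [← (hpt t ht).tsum_eq, ← ENNReal.coe_tsum hs2]
      exact ENNReal.coe_le_coe.2 (nnnorm_tsum_le hs2)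
    have hFmeas : ∀ n, Measurable fun t : ℝ => ((‖F n t‖₊ : ℝ≥0∞)) := by
      intro n
      have : Measurable (F n) := by
        apply Measurable.mul _ measurable_const
        exact Complex.measurable_ofReal.comp (hmeas n)
      exact this.enorm
    have hterm : ∀ n, ∫⁻ t in Set.Ioi (0:ℝ), (‖F n t‖₊ : ℝ≥0∞) ∂μ
        ≤ S * ENNReal.ofReal (‖a n‖ * ‖z‖ ^ n) := by
      intro n
      have h1 : ∀ᵐ t ∂(μ.restrict (Set.Ioi (0:ℝ))),
          (‖F n t‖₊ : ℝ≥0∞)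
            = (‖(1 / t ^ (n+1) : ℝ)‖₊ : ℝ≥0∞) * ENNReal.ofReal (‖a n‖ * ‖z‖ ^ n) := by
        filter_upwards [ae_restrict_mem measurableSet_Ioi] with t ht
        have ht' : (0:ℝ) < t := ht
        have e1 : ‖F n t‖ = ‖(1 / t ^ (n+1) : ℝ)‖ * (‖a n‖ * ‖z‖ ^ n) := by
          rw [hnormF n t ht, Real.norm_eq_abs,
            abs_of_nonneg (by positivity : (0:ℝ) ≤ 1 / t ^ (n+1)), norm_mul, norm_pow]
        rw [← ENNReal.ofReal_coe_nnreal, ← ENNReal.ofReal_coe_nnreal, coe_nnnorm, coe_nnnorm, e1,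
          ENNReal.ofReal_mul (norm_nonneg _)]
      rw [lintegral_congr_ae h1, lintegral_mul_const' _ _ ENNReal.ofReal_ne_top]
      exact mul_le_mul_left (hfin n) _
    have hkey : (∫⁻ t in Set.Ioi (0:ℝ),
        (‖(1 / (t:ℂ)) * f (z / (t:ℂ))‖₊ : ℝ≥0∞) ∂μ) < ⊤ := by
      calc ∫⁻ t in Set.Ioi (0:ℝ), (‖(1 / (t:ℂ)) * f (z / (t:ℂ))‖₊ : ℝ≥0∞) ∂μ
        ≤ ∫⁻ t in Set.Ioi (0:ℝ), ∑' n, (‖F n t‖₊ : ℝ≥0∞) ∂μ := lintegral_mono_ae hbound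
      _ = ∑' n, ∫⁻ t in Set.Ioi (0:ℝ), (‖F n t‖₊ : ℝ≥0∞) ∂μ :=
          lintegral_tsum fun n => (hFmeas n).aemeasurable
      _ ≤ ∑' n, S * ENNReal.ofReal (‖a n‖ * ‖z‖ ^ n) := ENNReal.tsum_le_tsum hterm
      _ = S * ∑' n, ENNReal.ofReal (‖a n‖ * ‖z‖ ^ n) := ENNReal.tsum_mul_left
      _ < ⊤ := by
          apply ENNReal.mul_lt_top hS
          rw [← ENNReal.ofReal_tsum_of_nonneg (fun n => by positivity) (hsumm z)]
          exact ENNReal.ofReal_lt_top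
    exact hkey
  refine ⟨fun z => (main z).1, fun z => (main z).2, ?_⟩
  refine auxDiff (fun n => ((m n : ℝ) : ℂ) * a n) _ ?_ (fun z => (main z).2)
  intro z
  refine Summable.of_nonneg_of_le (fun n => by positivity) (fun n => ?_)
    (((hsumm z).mul_left C))
  have h1 : ‖((m n : ℝ) : ℂ) * a n‖ = m n * ‖a n‖ := by
    rw [norm_mul, Complex.norm_real, Real.norm_eq_abs, abs_of_nonneg (hm_nonneg n)]
  rw [h1]
  calc m n * ‖a n‖ * ‖z‖ ^ n ≤ C * ‖a n‖ * ‖z‖ ^ n := by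
        apply mul_le_mul_of_nonneg_right _ (by positivity)
        exact mul_le_mul_of_nonneg_right (hm_le n) (norm_nonneg _)
    _ = C * (‖a n‖ * ‖z‖ ^ n) := by ring
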